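/- Let α,β,μ be reals with α,β>0 and Δ = α²+β²−2μ² > 0. Then ∂_β M[B_μ] = 4(Δ² + 2μ²Δ + 4μ²β²)/(Δ² + 8μ²β²), which is strictly positive. -/

import Mathlib

open Real

/-- Mass of the Gardner breather as a function of the parameters `α, β, μ`. -/
noncomputable def breatherMass (α β μ : ℝ) : ℝ :=
  4 * β + 2 * Real.sqrt 2 * μ *
    Real.arctan (2 * Real.sqrt 2 * μ * β / (α ^ 2 + β ^ 2 - 2 * μ ^ 2))

theorem gardner_breather_mass_deriv_beta (α β μ : ℝ) (hα : 0 < α) (hβ : 0 < β)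
    (hΔ : 0 < α ^ 2 + β ^ 2 - 2 * μ ^ 2) :
    HasDerivAt (fun b => breatherMass α b μ)
      (4 * ((α ^ 2 + β ^ 2 - 2 * μ ^ 2) ^ 2
          + 2 * μ ^ 2 * (α ^ 2 + β ^ 2 - 2 * μ ^ 2) + 4 * μ ^ 2 * β ^ 2) /
        ((α ^ 2 + β ^ 2 - 2 * μ ^ 2) ^ 2 + 8 * μ ^ 2 * β ^ 2)) β ∧
    0 < 4 * ((α ^ 2 + β ^ 2 - 2 * μ ^ 2) ^ 2
          + 2 * μ ^ 2 * (α ^ 2 + β ^ 2 - 2 * μ ^ 2) + 4 * μ ^ 2 * β ^ 2) /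
        ((α ^ 2 + β ^ 2 - 2 * μ ^ 2) ^ 2 + 8 * μ ^ 2 * β ^ 2) := by
  have hD : (α ^ 2 + β ^ 2 - 2 * μ ^ 2) ≠ 0 := ne_of_gt hΔ
  have hs2 : Real.sqrt 2 ^ 2 = 2 := Real.sq_sqrt (by norm_num)
  have hden : 0 < (α ^ 2 + β ^ 2 - 2 * μ ^ 2) ^ 2 + 8 * μ ^ 2 * β ^ 2 := by
    have := pow_pos hΔ 2
    nlinarith [sq_nonneg (μ * β)]
  constructor
  · have h1 : HasDerivAt (fun b : ℝ => 2 * Real.sqrt 2 * μ * b) (2 * Real.sqrt 2 * μ) β := by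
      simpa using (hasDerivAt_id β).const_mul (2 * Real.sqrt 2 * μ)
    have h2 : HasDerivAt (fun b : ℝ => α ^ 2 + b ^ 2 - 2 * μ ^ 2) (2 * β) β := by
      have := ((hasDerivAt_pow 2 β).const_add (α ^ 2)).sub_const (2 * μ ^ 2)
      simpa using this
    have hdiv := h1.div h2 hD
    have harc := hdiv.arctan
    have hlin : HasDerivAt (fun b : ℝ => 4 * b) 4 β := by
      simpa using (hasDerivAt_id β).const_mul (4 : ℝ)
    have hfull := hlin.add (harc.const_mul (2 * Real.sqrt 2 * μ))
    have heq : (fun b => breatherMass α b μ) =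
        fun b : ℝ => 4 * b + 2 * Real.sqrt 2 * μ *
          Real.arctan (2 * Real.sqrt 2 * μ * b / (α ^ 2 + b ^ 2 - 2 * μ ^ 2)) := rfl
    rw [heq]
    refine hfull.congr_deriv ?_
    have h1p : (0:ℝ) < 1 + (2 * Real.sqrt 2 * μ * β / (α ^ 2 + β ^ 2 - 2 * μ ^ 2)) ^ 2 := by
      positivity
    have hs4 : Real.sqrt 2 ^ 4 = 4 := by
      rw [show (4:ℕ) = 2 * 2 from rfl, pow_mul, hs2]; norm_num
    simp only [Pi.div_apply]
    field_simp
    ring_nf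
    simp only [hs2, hs4]
    ring
  · apply div_pos _ hden
    have := pow_pos hΔ 2
    nlinarith [sq_nonneg (μ * β), mul_pos (mul_pos (by positivity : (0:ℝ) < 2 * μ ^ 2 + 0 + 1) hΔ) hΔ]
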